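/- Let f(x) = ½⟨x, Ax⟩ on ℝ² with A = [[2, 2], [2, 1]], let φ be the indicator function of the nonnegative orthant ℝ²₊, τ = 1, and z̄ = (0,0). Then each of the four matrices AD + I − D, for D ∈ {I, diag(1,0), diag(0,1), 0}, is invertible, yet A is not positive semidefinite on ℝ² (e.g. ⟨h, Ah⟩ < 0 for h = (1, −2)). -/

import Mathlib

open Matrix

lemma neg_quad : ((![1, -2] : Fin 2 → ℝ) ⬝ᵥ ((!![2, 2; 2, 1] : Matrix (Fin 2) (Fin 2) ℝ).mulVec ![1, -2]) < 0) := by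
  norm_num [dotProduct, Matrix.mulVec, Fin.sum_univ_two]

/-- for `A = [[2,2],[2,1]]`, each matrix `AD + I − D` with
`D ∈ {I, diag(1,0), diag(0,1), 0}` is invertible, yet `A` is not positive semidefinite;
in particular `⟨h, Ah⟩ < 0` for `h = (1, −2)`. -/
theorem stmt_8 :
    (∀ D ∈ ({1, Matrix.diagonal ![1, 0], Matrix.diagonal ![0, 1], 0} :
        Set (Matrix (Fin 2) (Fin 2) ℝ)),
      IsUnit ((!![2, 2; 2, 1] : Matrix (Fin 2) (Fin 2) ℝ) * D + 1 - D)) ∧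
    (¬ (!![2, 2; 2, 1] : Matrix (Fin 2) (Fin 2) ℝ).PosSemidef) ∧
    ((![1, -2] : Fin 2 → ℝ) ⬝ᵥ ((!![2, 2; 2, 1] : Matrix (Fin 2) (Fin 2) ℝ).mulVec ![1, -2]) < 0) := by
  refine ⟨?_, ?_, neg_quad⟩
  · intro D hD
    rw [Matrix.isUnit_iff_isUnit_det]
    rcases hD with rfl | rfl | rfl | rfl <;>
      · rw [isUnit_iff_ne_zero]
        norm_num [Matrix.det_fin_two, Matrix.mul_apply, Fin.sum_univ_two,
          Matrix.diagonal, Matrix.one_apply, Matrix.vecHead, Matrix.vecTail, Function.comp]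
  · intro h
    have := (Matrix.posSemidef_iff_dotProduct_mulVec.mp h).2 ![1, -2]
    rw [show (star ![1,-2] : Fin 2 → ℝ) = ![1,-2] by simp] at this
    exact absurd this (not_le.mpr neg_quad)
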